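/- Let W > 0, δ, ε ∈ (0,1), and let σ(z) = 1/(1 + e^{−z}). Let D be a probability distribution on (closed unit ball of ℝ^d) × [0,1] and let w* ∈ ℝ^d with ‖w*‖ ≤ W be such that for (x,y) ~ D the conditional expectation satisfies E[y | x] = σ(⟨w*, x⟩) almost surely. Fix w in the closed ball of radius W centered at the origin, and let (x_1,y_1),…,(x_m,y_m) be i.i.d. samples from D with m ≥ (8·e^{2W}·(W+1)²/ε²)·log(1/δ). Define err_m(v) = (1/m)·Σ_{i=1}^m (y_i − σ(⟨v, x_i⟩))². Then with probability at least 1 − δ, err_m is (ε, e^W, w*)-SLQC at w. -/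

import Mathlib

set_option maxHeartbeats 1000000


open RealInnerProductSpace MeasureTheory ProbabilityTheory
open scoped ENNReal

noncomputable def sigmoid10 (z : ℝ) : ℝ := 1 / (1 + Real.exp (-z))

noncomputable def dsig (z : ℝ) : ℝ := Real.exp (-z) / (1 + Real.exp (-z)) ^ 2

section SigmoidLemmas

lemma one_add_exp_pos (z : ℝ) : 0 < 1 + Real.exp (-z) := by positivity

lemma sig_hasDerivAt (z : ℝ) : HasDerivAt sigmoid10 (dsig z) z := by
  have h1 : HasDerivAt (fun z : ℝ => 1 + Real.exp (-z)) (-Real.exp (-z)) z := by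
    simpa using ((Real.hasDerivAt_exp (-z)).comp z ((hasDerivAt_id z).neg)).const_add 1
  have h2 := h1.inv (by positivity)
  have : sigmoid10 = fun z : ℝ => (1 + Real.exp (-z))⁻¹ := by
    funext z; simp [sigmoid10, one_div]
  rw [this]
  convert h2 using 1
  · rfl
  · rfl
  · rfl
  · simp [dsig]

lemma sig_pos (z : ℝ) : 0 < sigmoid10 z := by
  unfold sigmoid10; positivity

lemma sig_lt_one (z : ℝ) : sigmoid10 z < 1 := by
  unfold sigmoid10
  rw [div_lt_one (one_add_exp_pos z)]
  nlinarith [Real.exp_pos (-z)]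

lemma dsig_pos (z : ℝ) : 0 < dsig z := by unfold dsig; positivity

lemma dsig_le (z : ℝ) : dsig z ≤ 1 / 4 := by
  unfold dsig
  rw [div_le_div_iff₀ (by positivity) (by norm_num)]
  nlinarith [Real.exp_pos (-z), sq_nonneg (1 - Real.exp (-z))]

lemma dsig_ge {W z : ℝ} (hz : |z| ≤ W) : Real.exp (-W) / 4 ≤ dsig z := by
  have hE : (1:ℝ) ≤ Real.exp W := Real.one_le_exp (le_trans (abs_nonneg z) hz)
  have hu1 : Real.exp (-W) ≤ Real.exp (-z) := Real.exp_le_exp.2 (by cases abs_le.1 hz; linarith)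
  have hu2 : Real.exp (-z) ≤ Real.exp W := Real.exp_le_exp.2 (by cases abs_le.1 hz; linarith)
  have hEinv : Real.exp (-W) = (Real.exp W)⁻¹ := by rw [Real.exp_neg]
  set u := Real.exp (-z) with hu
  set E := Real.exp W with hE'
  have hu0 : 0 < u := Real.exp_pos _
  rw [hEinv] at hu1 ⊢
  have hEpos : (0:ℝ) < E := lt_of_lt_of_le one_pos hE
  have hu1' : 1 ≤ u * E := by
    calc (1:ℝ) = E⁻¹ * E := by field_simp
    _ ≤ u * E := by gcongr
  have hgoal : (1+u)^2 ≤ 4*u*E := by nlinarith [sq_nonneg (u - E), sq_nonneg (u*E - 1)]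
  show E⁻¹ / 4 ≤ u / (1+u)^2
  rw [div_le_div_iff₀ (by norm_num) (by positivity)]
  rw [inv_mul_le_iff₀ (by positivity : (0:ℝ) < E)] at *
  nlinarith

lemma sig_mono : Monotone sigmoid10 := by
  have : ∀ z, deriv sigmoid10 z = dsig z := fun z => (sig_hasDerivAt z).deriv
  exact (StrictMono.monotone (strictMono_of_deriv_pos (fun z => this z ▸ dsig_pos z)))

lemma sig_lipschitz (a b : ℝ) : |sigmoid10 a - sigmoid10 b| ≤ |a - b| / 4 := by
  have h := Convex.norm_image_sub_le_of_norm_hasDerivWithin_le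
    (f := sigmoid10) (f' := dsig) (C := 1/4) (s := Set.univ)
    (fun x _ => (sig_hasDerivAt x).hasDerivWithinAt)
    (fun x _ => by rw [Real.norm_eq_abs, abs_of_pos (dsig_pos x)]; exact dsig_le x)
    convex_univ (Set.mem_univ b) (Set.mem_univ a)
  rw [Real.norm_eq_abs, Real.norm_eq_abs] at h
  linarith

lemma sig_key (a b : ℝ) : 4 * (sigmoid10 a - sigmoid10 b) ^ 2 ≤ (sigmoid10 a - sigmoid10 b) * (a - b) := by
  rcases le_total a b with h | h
  · have hs : sigmoid10 a ≤ sigmoid10 b := sig_mono h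
    have hl := sig_lipschitz a b
    rw [abs_of_nonpos (by linarith), abs_of_nonpos (by linarith)] at hl
    nlinarith
  · have hs : sigmoid10 b ≤ sigmoid10 a := sig_mono h
    have hl := sig_lipschitz a b
    rw [abs_of_nonneg (by linarith), abs_of_nonneg (by linarith)] at hl
    nlinarith

lemma sig_cont : Continuous sigmoid10 := by
  unfold sigmoid10
  exact continuous_const.div (by continuity) (fun z => (one_add_exp_pos z).ne')

lemma dsig_cont : Continuous dsig := by
  unfold dsig
  exact (by continuity : Continuous fun z:ℝ => Real.exp (-z)).div (by continuity)
    (fun z => by positivity)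

lemma coef_bound {W a b : ℝ} (hW : 0 < W) (ha : |a| ≤ W) (hb : |b| ≤ W) :
    |2*(dsig a*(a-b) - 2*Real.exp (-W)*(sigmoid10 a - sigmoid10 b))| ≤ W + 2 := by
  have he : 0 < Real.exp (-W) := Real.exp_pos _
  have hab : |a - b| ≤ 2*W := by
    obtain ⟨h1, h2⟩ := abs_le.1 ha; obtain ⟨h3, h4⟩ := abs_le.1 hb
    rw [abs_le]; constructor <;> linarith
  have h1 : |dsig a * (a-b)| ≤ W/2 := by
    rw [abs_mul, abs_of_pos (dsig_pos a)]
    nlinarith [dsig_le a, dsig_pos a, abs_nonneg (a-b)]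
  have heW : Real.exp (-W) * W ≤ 1 := by
    have h := Real.add_one_le_exp W
    rw [Real.exp_neg]
    rw [inv_mul_le_iff₀ (Real.exp_pos W)]
    linarith
  have h2 : |2*Real.exp (-W)*(sigmoid10 a - sigmoid10 b)| ≤ 1 := by
    have hl := sig_lipschitz a b
    rw [abs_mul, abs_of_pos (by positivity : (0:ℝ) < 2*Real.exp (-W))]
    nlinarith [abs_nonneg (sigmoid10 a - sigmoid10 b)]
  calc |2*(dsig a*(a-b) - 2*Real.exp (-W)*(sigmoid10 a - sigmoid10 b))|
      ≤ |2*(dsig a*(a-b))| + |2*(2*Real.exp (-W)*(sigmoid10 a - sigmoid10 b))| := by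
        rw [show (2:ℝ)*(dsig a*(a-b) - 2*Real.exp (-W)*(sigmoid10 a - sigmoid10 b))
          = 2*(dsig a*(a-b)) - 2*(2*Real.exp (-W)*(sigmoid10 a - sigmoid10 b)) by ring]
        exact abs_sub _ _
    _ ≤ W + 2 := by
        rw [show |(2:ℝ)*(dsig a*(a-b))| = 2*|dsig a*(a-b)| by rw [abs_mul, abs_two],
          show |(2:ℝ)*(2*Real.exp (-W)*(sigmoid10 a - sigmoid10 b))|
            = 2*|2*Real.exp (-W)*(sigmoid10 a - sigmoid10 b)| by rw [abs_mul, abs_two]]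
        linarith

lemma exp_le_cosh_aux (lam B v : ℝ) (hB : 0 < B) (hv : |v| ≤ B) :
    Real.exp (lam*v) ≤ Real.cosh (lam*B) + (v/B)*Real.sinh (lam*B) := by
  obtain ⟨h1, h2⟩ := abs_le.1 hv
  have hθ0 : (0:ℝ) ≤ (B+v)/(2*B) := div_nonneg (by linarith) (by linarith)
  have hθ0' : (0:ℝ) ≤ (B-v)/(2*B) := div_nonneg (by linarith) (by linarith)
  have hsum : (B+v)/(2*B) + (B-v)/(2*B) = 1 := by field_simp; ring
  have hcvx := convexOn_exp.2 (Set.mem_univ (lam*B)) (Set.mem_univ (-(lam*B))) hθ0 hθ0' hsum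
  simp only [smul_eq_mul] at hcvx
  have harg : (B+v)/(2*B) * (lam*B) + (B-v)/(2*B) * (-(lam*B)) = lam*v := by
    field_simp; ring
  rw [harg] at hcvx
  rw [Real.cosh_eq, Real.sinh_eq]
  calc Real.exp (lam*v) ≤ (B+v)/(2*B) * Real.exp (lam*B) + (B-v)/(2*B) * Real.exp (-(lam*B)) := hcvx
  _ = (Real.exp (lam*B) + Real.exp (-(lam*B)))/2 + (v/B)*((Real.exp (lam*B) - Real.exp (-(lam*B)))/2) := by
      field_simp; ring

end SigmoidLemmas

section PerSample

lemma per_sample (e r s ξ D q d : ℝ) (he : 0 < e) (hr : 0 ≤ r)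
    (hq : |q| ≤ r) (hs : |s| ≤ 1) (hξ : |ξ| ≤ 1)
    (hD4 : D ≤ 1/4) (hDe : e/4 ≤ D) (hkey : 4*s^2 ≤ s*d) :
    2*(s-ξ)*D*(-d+q) ≤ -2*e*s^2 + r + 2*ξ*(D*d - 2*e*s) + 4*e*ξ*s := by
  obtain ⟨hq1, hq2⟩ := abs_le.1 hq
  obtain ⟨hs1, hs2⟩ := abs_le.1 hs
  obtain ⟨hξ1, hξ2⟩ := abs_le.1 hξ
  have hD0 : 0 < D := lt_of_lt_of_le (by positivity) hDe
  have h1 : 2*D*(s*d) ≥ 2*e*s^2 := by nlinarith [sq_nonneg s]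
  have hX : q*(s-ξ) ≤ 2*r := by
    have habs : |q*(s-ξ)| ≤ r*2 := by
      rw [abs_mul]
      exact mul_le_mul hq (abs_le.2 ⟨by linarith, by linarith⟩) (abs_nonneg _) hr
    have := (abs_le.1 habs).2; linarith
  have h2 : 2*D*(q*(s-ξ)) ≤ r := by nlinarith [mul_le_mul_of_nonneg_left hX hD0.le]
  nlinarith

lemma det_core {d m : ℕ} (W ε : ℝ) (hW : 0 < W) (hε : 0 < ε)
    (w wstar : EuclideanSpace ℝ (Fin d)) (hw : ‖w‖ ≤ W) (hwstar : ‖wstar‖ ≤ W)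
    (x : Fin m → EuclideanSpace ℝ (Fin d)) (y : Fin m → ℝ) (hm : 0 < (m:ℝ))
    (hx : ∀ i, ‖x i‖ ≤ 1) (hy : ∀ i, y i ∈ Set.Icc (0:ℝ) 1)
    (hgood : ∑ i, 2*(y i - sigmoid10 ⟪wstar, x i⟫) *
        (dsig ⟪w, x i⟫ * (⟪w, x i⟫ - ⟪wstar, x i⟫)
          - 2*Real.exp (-W) * (sigmoid10 ⟪w, x i⟫ - sigmoid10 ⟪wstar, x i⟫))
      ≤ m * (ε * Real.exp (-W)))
    (hbad : (1/(m:ℝ)) * ∑ i, (y i - sigmoid10 ⟪w, x i⟫)^2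
      - (1/(m:ℝ)) * ∑ i, (y i - sigmoid10 ⟪wstar, x i⟫)^2 > ε)
    (v : EuclideanSpace ℝ (Fin d)) (hv : v ∈ Metric.closedBall wstar (ε / Real.exp W)) :
    ⟪(1/(m:ℝ)) • ∑ i, (2 * (sigmoid10 ⟪w, x i⟫ - y i) * dsig ⟪w, x i⟫) • x i, v - w⟫ < 0 := by
  set e := Real.exp (-W) with he_def
  have he : 0 < e := Real.exp_pos _
  have hre : ε / Real.exp W = ε * e := by rw [he_def, Real.exp_neg]; ring
  have hinner : ⟪(1/(m:ℝ)) • ∑ i, (2 * (sigmoid10 ⟪w, x i⟫ - y i) * dsig ⟪w, x i⟫) • x i, v - w⟫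
      = (1/(m:ℝ)) * ∑ i, (2 * (sigmoid10 ⟪w, x i⟫ - y i) * dsig ⟪w, x i⟫) * ⟪x i, v - w⟫ := by
    rw [real_inner_smul_left, sum_inner]
    congr 1
    exact Finset.sum_congr rfl fun i _ => by rw [real_inner_smul_left]
  rw [hinner]
  have hmain : ∑ i, (2 * (sigmoid10 ⟪w, x i⟫ - y i) * dsig ⟪w, x i⟫) * ⟪x i, v - w⟫ < 0 := by
    have hkey : ∀ i : Fin m, (2 * (sigmoid10 ⟪w, x i⟫ - y i) * dsig ⟪w, x i⟫) * ⟪x i, v - w⟫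
        ≤ -2*e*(sigmoid10 ⟪w, x i⟫ - sigmoid10 ⟪wstar, x i⟫)^2 + ε*e
          + 2*(y i - sigmoid10 ⟪wstar, x i⟫) * (dsig ⟪w, x i⟫ * (⟪w, x i⟫ - ⟪wstar, x i⟫)
            - 2*e*(sigmoid10 ⟪w, x i⟫ - sigmoid10 ⟪wstar, x i⟫))
          + 4*e*(y i - sigmoid10 ⟪wstar, x i⟫)*(sigmoid10 ⟪w, x i⟫ - sigmoid10 ⟪wstar, x i⟫) := by
      intro i
      have hsplit : ⟪x i, v - w⟫ = -(⟪w, x i⟫ - ⟪wstar, x i⟫) + ⟪x i, v - wstar⟫ := by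
        simp only [inner_sub_right]
        rw [real_inner_comm (x i) w, real_inner_comm (x i) wstar]
        ring
      set a := ⟪w, x i⟫ with ha_def
      set b := ⟪wstar, x i⟫ with hb_def
      have haW : |a| ≤ W := by
        calc |a| ≤ ‖w‖ * ‖x i‖ := abs_real_inner_le_norm w (x i)
        _ ≤ W * 1 := mul_le_mul hw (hx i) (norm_nonneg _) (le_trans (norm_nonneg _) hw)
        _ = W := mul_one W
      have hq : |⟪x i, v - wstar⟫| ≤ ε * e := by
        calc |⟪x i, v - wstar⟫| ≤ ‖x i‖ * ‖v - wstar‖ := abs_real_inner_le_norm _ _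
        _ ≤ 1 * (ε * e) := by
            apply mul_le_mul (hx i) _ (norm_nonneg _) zero_le_one
            rw [← hre, ← dist_eq_norm]; exact Metric.mem_closedBall.1 hv
        _ = ε * e := one_mul _
      have hs : |sigmoid10 a - sigmoid10 b| ≤ 1 := by
        have := sig_pos a; have := sig_lt_one a; have := sig_pos b; have := sig_lt_one b
        rw [abs_le]; constructor <;> linarith
      have hξ : |y i - sigmoid10 b| ≤ 1 := by
        have := sig_pos b; have := sig_lt_one b
        obtain ⟨h0, h1⟩ := hy i
        rw [abs_le]; constructor <;> linarith
      have hps := per_sample e (ε*e) (sigmoid10 a - sigmoid10 b) (y i - sigmoid10 b)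
        (dsig a) ⟪x i, v - wstar⟫ (a - b) he (by positivity) hq hs hξ (dsig_le a)
        (dsig_ge haW) (sig_key a b)
      have hcoef : sigmoid10 a - y i = (sigmoid10 a - sigmoid10 b) - (y i - sigmoid10 b) := by ring
      rw [hsplit, hcoef]
      linarith [hps]
    have hsum := Finset.sum_le_sum (fun i (_ : i ∈ Finset.univ) => hkey i)
    have hS : ∑ i, ((y i - sigmoid10 ⟪w, x i⟫)^2 - (y i - sigmoid10 ⟪wstar, x i⟫)^2) > m * ε := by
      have h' : (1/(m:ℝ)) * ∑ i, ((y i - sigmoid10 ⟪w, x i⟫)^2 - (y i - sigmoid10 ⟪wstar, x i⟫)^2) > ε := by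
        rw [Finset.sum_sub_distrib, mul_sub]; exact hbad
      have h2 := mul_lt_mul_of_pos_left h' hm
      calc (m:ℝ)*ε < (m:ℝ) * ((1/(m:ℝ)) * ∑ i, ((y i - sigmoid10 ⟪w, x i⟫)^2 - (y i - sigmoid10 ⟪wstar, x i⟫)^2)) := h2
      _ = ∑ i, ((y i - sigmoid10 ⟪w, x i⟫)^2 - (y i - sigmoid10 ⟪wstar, x i⟫)^2) := by
          field_simp
    have hident : ∀ i : Fin m, (y i - sigmoid10 ⟪w, x i⟫)^2 - (y i - sigmoid10 ⟪wstar, x i⟫)^2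
        = (sigmoid10 ⟪w, x i⟫ - sigmoid10 ⟪wstar, x i⟫)^2
          - 2*(y i - sigmoid10 ⟪wstar, x i⟫)*(sigmoid10 ⟪w, x i⟫ - sigmoid10 ⟪wstar, x i⟫) := by
      intro i; ring
    rw [Finset.sum_congr rfl (fun i _ => hident i)] at hS
    rw [Finset.sum_sub_distrib] at hS
    calc ∑ i, (2 * (sigmoid10 ⟪w, x i⟫ - y i) * dsig ⟪w, x i⟫) * ⟪x i, v - w⟫
        ≤ ∑ i, (-2*e*(sigmoid10 ⟪w, x i⟫ - sigmoid10 ⟪wstar, x i⟫)^2 + ε*e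
          + 2*(y i - sigmoid10 ⟪wstar, x i⟫) * (dsig ⟪w, x i⟫ * (⟪w, x i⟫ - ⟪wstar, x i⟫)
            - 2*e*(sigmoid10 ⟪w, x i⟫ - sigmoid10 ⟪wstar, x i⟫))
          + 4*e*(y i - sigmoid10 ⟪wstar, x i⟫)*(sigmoid10 ⟪w, x i⟫ - sigmoid10 ⟪wstar, x i⟫)) := hsum
    _ < 0 := by
        simp only [Finset.sum_add_distrib, Finset.sum_const, Finset.card_univ, Fintype.card_fin,
          nsmul_eq_mul]
        have e1 : ∑ i : Fin m, -2*e*(sigmoid10 ⟪w, x i⟫ - sigmoid10 ⟪wstar, x i⟫)^2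
            = -2*e* ∑ i, (sigmoid10 ⟪w, x i⟫ - sigmoid10 ⟪wstar, x i⟫)^2 := by
          rw [Finset.mul_sum]
        have e2 : ∑ i : Fin m, 4*e*(y i - sigmoid10 ⟪wstar, x i⟫)*(sigmoid10 ⟪w, x i⟫ - sigmoid10 ⟪wstar, x i⟫)
            = 2*e* ∑ i, 2*(y i - sigmoid10 ⟪wstar, x i⟫)*(sigmoid10 ⟪w, x i⟫ - sigmoid10 ⟪wstar, x i⟫) := by
          rw [Finset.mul_sum]; exact Finset.sum_congr rfl fun i _ => by ring
        rw [e1, e2]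
        nlinarith [hS, hgood, mul_pos hm (mul_pos hε he),
          mul_lt_mul_of_pos_left hS (show (0:ℝ) < 2*e by positivity)]
  have : 0 < 1/(m:ℝ) := by positivity
  exact mul_neg_of_pos_of_neg this hmain

end PerSample

section Gradient

lemma err_hasGradientAt {d m : ℕ} (x : Fin m → EuclideanSpace ℝ (Fin d))
    (y : Fin m → ℝ) (w : EuclideanSpace ℝ (Fin d)) :
    HasGradientAt (fun v => (1/(m:ℝ)) * ∑ i, (y i - sigmoid10 ⟪v, x i⟫) ^ 2)
      ((1/(m:ℝ)) • ∑ i, (2 * (sigmoid10 ⟪w, x i⟫ - y i) * dsig ⟪w, x i⟫) • x i) w := by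
  rw [hasGradientAt_iff_hasFDerivAt]
  have hterm : ∀ i : Fin m, HasFDerivAt (fun v : EuclideanSpace ℝ (Fin d) => (y i - sigmoid10 ⟪v, x i⟫) ^ 2)
      ((2 * (sigmoid10 ⟪w, x i⟫ - y i) * dsig ⟪w, x i⟫) • (innerSL ℝ (x i))) w := by
    intro i
    have hinner : HasFDerivAt (fun v : EuclideanSpace ℝ (Fin d) => ⟪v, x i⟫) (innerSL ℝ (x i)) w := by
      have : (fun v : EuclideanSpace ℝ (Fin d) => ⟪v, x i⟫) = fun v => (innerSL ℝ (x i)) v := by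
        funext v; rw [real_inner_comm]; rfl
      rw [this]
      exact (innerSL ℝ (x i)).hasFDerivAt
    have hphi : HasDerivAt (fun z : ℝ => (y i - sigmoid10 z) ^ 2)
        (2 * (sigmoid10 ⟪w, x i⟫ - y i) * dsig ⟪w, x i⟫) ⟪w, x i⟫ := by
      have h1 : HasDerivAt (fun z : ℝ => y i - sigmoid10 z) (-dsig ⟪w, x i⟫) ⟪w, x i⟫ :=
        (sig_hasDerivAt _).const_sub (y i)
      have := h1.pow 2
      convert this using 1
      · rfl
      · rfl
      · rfl
      · push_cast; ring
    exact hphi.comp_hasFDerivAt w hinner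
  have hsum := HasFDerivAt.sum (fun i (_ : i ∈ Finset.univ) => hterm i)
  have := hsum.const_mul ((1:ℝ)/(m:ℝ))
  convert this using 1
  · rfl
  · funext v; simp only [Finset.sum_apply]
  ext v
  simp [InnerProductSpace.toDual, inner_sum, real_inner_smul_left, Finset.mul_sum]

end Gradient

theorem stmt_10 {d : ℕ} (W δ ε : ℝ) (hW : 0 < W)
    (hδ : δ ∈ Set.Ioo (0 : ℝ) 1) (hε : ε ∈ Set.Ioo (0 : ℝ) 1)
    (D : Measure (EuclideanSpace ℝ (Fin d) × ℝ)) [IsProbabilityMeasure D]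
    (hsupp : D {p | ‖p.1‖ ≤ 1 ∧ p.2 ∈ Set.Icc (0 : ℝ) 1} = 1)
    (wstar : EuclideanSpace ℝ (Fin d)) (hwstar : ‖wstar‖ ≤ W)
    (hcond : D[(fun p => p.2) | MeasurableSpace.comap Prod.fst inferInstance]
      =ᵐ[D] fun p => sigmoid10 ⟪wstar, p.1⟫)
    (w : EuclideanSpace ℝ (Fin d)) (hw : w ∈ Metric.closedBall 0 W)
    {Ω : Type*} [MeasurableSpace Ω] (μ : Measure Ω) [IsProbabilityMeasure μ]
    (m : ℕ) (hm : (m : ℝ) ≥ 8 * Real.exp (2 * W) * (W + 1) ^ 2 / ε ^ 2 * Real.log (1 / δ))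
    (Z : Fin m → Ω → EuclideanSpace ℝ (Fin d) × ℝ) (hZmeas : ∀ i, Measurable (Z i))
    (hZindep : iIndepFun Z μ)
    (hZlaw : ∀ i, Measure.map (Z i) μ = D)
    (err : Ω → EuclideanSpace ℝ (Fin d) → ℝ)
    (herr : ∀ ω v, err ω v = (1 / (m : ℝ)) * ∑ i, ((Z i ω).2 - sigmoid10 ⟪v, (Z i ω).1⟫) ^ 2) :
    μ {ω | err ω w - err ω wstar ≤ ε ∨
        (gradient (err ω) w ≠ 0 ∧
          ∀ v ∈ Metric.closedBall wstar (ε / Real.exp W),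
            ⟪gradient (err ω) w, v - w⟫ ≤ 0)} ≥ ENNReal.ofReal (1 - δ) := by
  obtain ⟨hδ0, hδ1⟩ := hδ
  obtain ⟨hε0, hε1⟩ := hε
  have hwW : ‖w‖ ≤ W := by simpa using Metric.mem_closedBall.1 hw
  have hlog : 0 < Real.log (1/δ) := Real.log_pos ((one_lt_div hδ0).2 hδ1)
  have hm0 : 0 < (m:ℝ) := lt_of_lt_of_le (by positivity) hm
  set e := Real.exp (-W) with he_def
  have he : 0 < e := Real.exp_pos _
  set t : ℝ := ε * e with ht_def
  have ht : 0 < t := by positivity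
  set B : ℝ := W + 2 with hB_def
  have hB : 0 < B := by positivity
  set lam : ℝ := t / B^2 with hlam_def
  have hlam : 0 < lam := by positivity
  -- the per-sample noise function
  set g : EuclideanSpace ℝ (Fin d) × ℝ → ℝ := fun p =>
    2*(p.2 - sigmoid10 ⟪wstar, p.1⟫) *
        (dsig ⟪w, p.1⟫ * (⟪w, p.1⟫ - ⟪wstar, p.1⟫)
          - 2*e * (sigmoid10 ⟪w, p.1⟫ - sigmoid10 ⟪wstar, p.1⟫)) with hg_def
  have hc1 : Continuous fun p : EuclideanSpace ℝ (Fin d) × ℝ => ⟪w, p.1⟫ :=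
    Continuous.inner continuous_const continuous_fst
  have hc2 : Continuous fun p : EuclideanSpace ℝ (Fin d) × ℝ => ⟪wstar, p.1⟫ :=
    Continuous.inner continuous_const continuous_fst
  have hgcont : Continuous g := by
    apply Continuous.mul
    · exact continuous_const.mul (continuous_snd.sub (sig_cont.comp hc2))
    · exact ((dsig_cont.comp hc1).mul (hc1.sub hc2)).sub
        (continuous_const.mul ((sig_cont.comp hc1).sub (sig_cont.comp hc2)))
  have hgmeas : Measurable g := hgcont.measurable
  -- the support set
  set S : Set (EuclideanSpace ℝ (Fin d) × ℝ) := {p | ‖p.1‖ ≤ 1 ∧ p.2 ∈ Set.Icc (0:ℝ) 1} with hS_def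
  have hSmeas : MeasurableSet S := by
    apply MeasurableSet.inter
    · exact measurableSet_le (continuous_fst.norm.measurable) measurable_const
    · exact (measurableSet_le measurable_const measurable_snd).inter
        (measurableSet_le measurable_snd measurable_const)
  have hScompl : D Sᶜ = 0 := by
    rw [measure_compl hSmeas (measure_ne_top D S), hsupp, measure_univ]
    simp
  have haeS : ∀ᵐ p ∂D, p ∈ S := by
    rw [MeasureTheory.ae_iff]
    exact hScompl
  -- bound on g on S
  have hgbound : ∀ p ∈ S, |g p| ≤ B := by
    rintro p ⟨hx1, hy0, hy1⟩
    have haW : |⟪w, p.1⟫| ≤ W := by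
      calc |⟪w, p.1⟫| ≤ ‖w‖ * ‖p.1‖ := abs_real_inner_le_norm _ _
      _ ≤ W * 1 := mul_le_mul hwW hx1 (norm_nonneg _) (le_trans (norm_nonneg _) hwW)
      _ = W := mul_one W
    have hbW : |⟪wstar, p.1⟫| ≤ W := by
      calc |⟪wstar, p.1⟫| ≤ ‖wstar‖ * ‖p.1‖ := abs_real_inner_le_norm _ _
      _ ≤ W * 1 := mul_le_mul hwstar hx1 (norm_nonneg _) (le_trans (norm_nonneg _) hwstar)
      _ = W := mul_one W
    have hξ : |p.2 - sigmoid10 ⟪wstar, p.1⟫| ≤ 1 := by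
      have := sig_pos ⟪wstar, p.1⟫; have := sig_lt_one ⟪wstar, p.1⟫
      rw [abs_le]; constructor <;> linarith
    have hcb := coef_bound hW haW hbW
    simp only [hg_def]
    have : 2*(p.2 - sigmoid10 ⟪wstar, p.1⟫) *
        (dsig ⟪w, p.1⟫ * (⟪w, p.1⟫ - ⟪wstar, p.1⟫)
          - 2*e * (sigmoid10 ⟪w, p.1⟫ - sigmoid10 ⟪wstar, p.1⟫))
        = (p.2 - sigmoid10 ⟪wstar, p.1⟫) *
          (2*(dsig ⟪w, p.1⟫ * (⟪w, p.1⟫ - ⟪wstar, p.1⟫)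
            - 2*Real.exp (-W) * (sigmoid10 ⟪w, p.1⟫ - sigmoid10 ⟪wstar, p.1⟫))) := by
      rw [he_def]; ring
    rw [this, abs_mul]
    calc |p.2 - sigmoid10 ⟪wstar, p.1⟫| * _ ≤ 1 * (W+2) :=
        mul_le_mul hξ hcb (abs_nonneg _) zero_le_one
    _ = B := by rw [hB_def]; ring
  have hgboundae : ∀ᵐ p ∂D, ‖g p‖ ≤ B := by
    filter_upwards [haeS] with p hp
    rw [Real.norm_eq_abs]; exact hgbound p hp
  -- g has mean zero
  have hgint : Integrable g D :=
    Integrable.mono' (integrable_const B) hgcont.aestronglyMeasurable hgboundae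
  have hgmean : ∫ p, g p ∂D = 0 := by
    have hHfun : Continuous fun x : EuclideanSpace ℝ (Fin d) =>
        2*(dsig ⟪w, x⟫ * (⟪w, x⟫ - ⟪wstar, x⟫)
          - 2*e * (sigmoid10 ⟪w, x⟫ - sigmoid10 ⟪wstar, x⟫)) := by
      have d1 : Continuous fun x : EuclideanSpace ℝ (Fin d) => ⟪w, x⟫ :=
        Continuous.inner continuous_const continuous_id
      have d2 : Continuous fun x : EuclideanSpace ℝ (Fin d) => ⟪wstar, x⟫ :=
        Continuous.inner continuous_const continuous_id
      exact continuous_const.mul (((dsig_cont.comp d1).mul (d1.sub d2)).sub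
        (continuous_const.mul ((sig_cont.comp d1).sub (sig_cont.comp d2))))
    set H : EuclideanSpace ℝ (Fin d) × ℝ → ℝ := fun p =>
      2*(dsig ⟪w, p.1⟫ * (⟪w, p.1⟫ - ⟪wstar, p.1⟫)
        - 2*e * (sigmoid10 ⟪w, p.1⟫ - sigmoid10 ⟪wstar, p.1⟫)) with hH_def
    have hHcont : Continuous H := hHfun.comp continuous_fst
    have hHbound : ∀ᵐ p ∂D, ‖H p‖ ≤ B := by
      filter_upwards [haeS] with p hp
      obtain ⟨hx1, _, _⟩ := hp
      have haW : |⟪w, p.1⟫| ≤ W := by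
        calc |⟪w, p.1⟫| ≤ ‖w‖ * ‖p.1‖ := abs_real_inner_le_norm _ _
        _ ≤ W * 1 := mul_le_mul hwW hx1 (norm_nonneg _) (le_trans (norm_nonneg _) hwW)
        _ = W := mul_one W
      have hbW : |⟪wstar, p.1⟫| ≤ W := by
        calc |⟪wstar, p.1⟫| ≤ ‖wstar‖ * ‖p.1‖ := abs_real_inner_le_norm _ _
        _ ≤ W * 1 := mul_le_mul hwstar hx1 (norm_nonneg _) (le_trans (norm_nonneg _) hwstar)
        _ = W := mul_one W
      have := coef_bound hW haW hbW
      rw [Real.norm_eq_abs]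
      simp only [hH_def, hB_def, he_def]
      exact this
    have hf2int : Integrable (fun p : EuclideanSpace ℝ (Fin d) × ℝ => p.2) D := by
      apply Integrable.mono' (integrable_const (1:ℝ)) measurable_snd.aestronglyMeasurable
      filter_upwards [haeS] with p hp
      obtain ⟨_, hy0, hy1⟩ := hp
      rw [Real.norm_eq_abs, abs_le]; exact ⟨by linarith, hy1⟩
    have hsig1 : ∀ z : ℝ, |sigmoid10 z| ≤ 1 := fun z => by
      have := sig_pos z; have h2 := sig_lt_one z
      rw [abs_le]; constructor <;> linarith
    have hint1 : Integrable (fun p : EuclideanSpace ℝ (Fin d) × ℝ => H p * p.2) D := by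
      apply Integrable.mono' (integrable_const (B*1))
        (hHcont.measurable.mul measurable_snd).aestronglyMeasurable
      filter_upwards [haeS, hHbound] with p hp hHb
      obtain ⟨_, hy0, hy1⟩ := hp
      simp only [Pi.mul_apply]
      rw [Real.norm_eq_abs, abs_mul]
      apply mul_le_mul (by rw [← Real.norm_eq_abs]; exact hHb) _ (abs_nonneg _) hB.le
      rw [abs_le]; exact ⟨by linarith, hy1⟩
    have hint2 : Integrable (fun p : EuclideanSpace ℝ (Fin d) × ℝ => H p * sigmoid10 ⟪wstar, p.1⟫) D := by
      apply Integrable.mono' (integrable_const (B*1))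
        (hHcont.mul (sig_cont.comp hc2)).measurable.aestronglyMeasurable
      filter_upwards [hHbound] with p hHb
      simp only [Pi.mul_apply, Function.comp_apply]
      rw [Real.norm_eq_abs, abs_mul]
      exact mul_le_mul (by rw [← Real.norm_eq_abs]; exact hHb) (hsig1 _) (abs_nonneg _) hB.le
    have hm' : MeasurableSpace.comap (Prod.fst : EuclideanSpace ℝ (Fin d) × ℝ →
        EuclideanSpace ℝ (Fin d)) inferInstance ≤ Prod.instMeasurableSpace :=
      measurable_fst.comap_le
    have hfstm : Measurable[MeasurableSpace.comap (Prod.fst : EuclideanSpace ℝ (Fin d) × ℝ →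
        EuclideanSpace ℝ (Fin d)) inferInstance] (Prod.fst : EuclideanSpace ℝ (Fin d) × ℝ →
        EuclideanSpace ℝ (Fin d)) := fun s hs => ⟨s, hs, rfl⟩
    have hHsm : StronglyMeasurable[MeasurableSpace.comap (Prod.fst : EuclideanSpace ℝ (Fin d) × ℝ →
        EuclideanSpace ℝ (Fin d)) inferInstance] H :=
      Measurable.stronglyMeasurable ((hHfun.measurable).comp hfstm)
    haveI : SigmaFinite (D.trim hm') := by
      haveI : IsFiniteMeasure (D.trim hm') := isFiniteMeasure_trim hm'
      infer_instance
    have hpull := condExp_stronglyMeasurable_mul_of_bound hm' hHsm hf2int B hHbound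
    have hmulcond : H * (D[(fun p => p.2) | MeasurableSpace.comap (Prod.fst :
        EuclideanSpace ℝ (Fin d) × ℝ → EuclideanSpace ℝ (Fin d)) inferInstance]) =ᵐ[D]
        fun p => H p * sigmoid10 ⟪wstar, p.1⟫ := by
      filter_upwards [hcond] with p hp
      simp only [Pi.mul_apply]
      rw [hp]
    have h1 : ∫ p, H p * p.2 ∂D = ∫ p, H p * sigmoid10 ⟪wstar, p.1⟫ ∂D := by
      have ha : ∫ p, (H * fun p : EuclideanSpace ℝ (Fin d) × ℝ => p.2) p ∂D
          = ∫ p, (D[(H * fun p : EuclideanSpace ℝ (Fin d) × ℝ => p.2) |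
            MeasurableSpace.comap (Prod.fst : EuclideanSpace ℝ (Fin d) × ℝ →
              EuclideanSpace ℝ (Fin d)) inferInstance]) p ∂D :=
        (integral_condExp hm').symm
      have hb : ∫ p, (D[(H * fun p : EuclideanSpace ℝ (Fin d) × ℝ => p.2) |
            MeasurableSpace.comap (Prod.fst : EuclideanSpace ℝ (Fin d) × ℝ →
              EuclideanSpace ℝ (Fin d)) inferInstance]) p ∂D
          = ∫ p, H p * sigmoid10 ⟪wstar, p.1⟫ ∂D :=
        integral_congr_ae (hpull.trans hmulcond)
      simpa using ha.trans hb
    have hgeq : g = fun p => H p * p.2 - H p * sigmoid10 ⟪wstar, p.1⟫ := by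
      funext p
      simp only [hg_def, hH_def]
      ring
    rw [hgeq, integral_sub hint1 hint2, h1, sub_self]
  -- the random variables
  set X : Fin m → Ω → ℝ := fun i ω => g (Z i ω) with hX_def
  have hXmeas : ∀ i, Measurable (X i) := fun i => hgmeas.comp (hZmeas i)
  have hXindep : iIndepFun X μ :=
    hZindep.comp (fun _ => g) (fun _ => hgmeas)
  -- mgf bound for each X i
  have hmgf_i : ∀ i, mgf (X i) μ lam ≤ Real.exp (lam^2*B^2/2) := by
    intro i
    have hchg : mgf (X i) μ lam = ∫ p, Real.exp (lam * g p) ∂D := by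
      rw [mgf, ← hZlaw i]
      rw [integral_map (hZmeas i).aemeasurable]
      exact (Real.continuous_exp.comp (continuous_const.mul hgcont)).aestronglyMeasurable
    rw [hchg]
    have hstep : ∫ p, Real.exp (lam * g p) ∂D
        ≤ ∫ p, (Real.cosh (lam*B) + (g p / B) * Real.sinh (lam*B)) ∂D := by
      apply integral_mono_ae
      · apply Integrable.mono' (integrable_const (Real.exp (lam*B)))
          (Real.continuous_exp.comp (continuous_const.mul hgcont)).aestronglyMeasurable
        filter_upwards [hgboundae] with p hp
        simp only [Function.comp_apply, Pi.mul_apply, ← hlam_def, Real.norm_eq_abs, Real.abs_exp, Real.exp_le_exp]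
        rw [Real.norm_eq_abs] at hp
        have := (abs_le.1 hp).2
        nlinarith
      · exact (integrable_const _).add (((hgint.div_const B).mul_const _))
      · filter_upwards [hgboundae] with p hp
        rw [Real.norm_eq_abs] at hp
        exact exp_le_cosh_aux lam B (g p) hB hp
    have hval : ∫ p, (Real.cosh (lam*B) + (g p / B) * Real.sinh (lam*B)) ∂D
        = Real.cosh (lam*B) := by
      rw [integral_add (integrable_const _) ((hgint.div_const B).mul_const _)]
      rw [integral_const, integral_mul_const, integral_div, hgmean]
      simp
    calc ∫ p, Real.exp (lam * g p) ∂D ≤ Real.cosh (lam*B) := hstep.trans_eq hval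
    _ ≤ Real.exp ((lam*B)^2/2) := Real.cosh_le_exp_half_sq _
    _ = Real.exp (lam^2*B^2/2) := by ring_nf
  -- Chernoff
  have hmgf_sum : mgf (∑ i, X i) μ lam ≤ Real.exp ((m:ℝ)*(lam^2*B^2/2)) := by
    rw [hXindep.mgf_sum hXmeas]
    calc ∏ i : Fin m, mgf (X i) μ lam ≤ ∏ _i : Fin m, Real.exp (lam^2*B^2/2) :=
        Finset.prod_le_prod (fun i _ => mgf_nonneg) (fun i _ => hmgf_i i)
    _ = Real.exp ((m:ℝ)*(lam^2*B^2/2)) := by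
        rw [Finset.prod_const, Finset.card_univ, Fintype.card_fin, ← Real.exp_nat_mul]
  have haeSZ : ∀ᵐ ω ∂μ, ∀ i, Z i ω ∈ S := by
    rw [MeasureTheory.ae_all_iff]
    intro i
    have : μ ((Z i) ⁻¹' Sᶜ) = 0 := by
      rw [← Measure.map_apply (hZmeas i) hSmeas.compl, hZlaw i, hScompl]
    rw [MeasureTheory.ae_iff]
    exact this
  have hXbae : ∀ᵐ ω ∂μ, ∀ i, |X i ω| ≤ B := by
    filter_upwards [haeSZ] with ω hω i
    exact hgbound _ (hω i)
  have hsumfun : (∑ i, X i) = fun ω => ∑ i, X i ω := by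
    funext ω; rw [Finset.sum_apply]
  have hint_exp : Integrable (fun ω => Real.exp (lam * (∑ i, X i) ω)) μ := by
    rw [hsumfun]
    apply Integrable.mono' (integrable_const (Real.exp (lam * ((m:ℝ)*B))))
    · exact (Real.measurable_exp.comp
        ((Finset.measurable_sum Finset.univ (fun i _ => hXmeas i)).const_mul lam)).aestronglyMeasurable
    · filter_upwards [hXbae] with ω hω
      simp only [Real.norm_eq_abs, Real.abs_exp, Real.exp_le_exp]
      have hsb : ∑ i, X i ω ≤ (m:ℝ)*B := by
        calc ∑ i, X i ω ≤ ∑ _i : Fin m, B := Finset.sum_le_sum (fun i _ => (abs_le.1 (hω i)).2)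
        _ = (m:ℝ)*B := by rw [Finset.sum_const, Finset.card_univ, Fintype.card_fin, nsmul_eq_mul]
      nlinarith
  have hcher := measure_ge_le_exp_mul_mgf (X := ∑ i, X i) (μ := μ) ((m:ℝ)*t) hlam.le hint_exp
  have hcher2 : (μ {ω | (m:ℝ)*t ≤ (∑ i, X i) ω}).toReal ≤ δ := by
    have hexp : Real.exp (-lam*((m:ℝ)*t)) * Real.exp ((m:ℝ)*(lam^2*B^2/2))
        = Real.exp (-(m:ℝ)*t^2/(2*B^2)) := by
      rw [← Real.exp_add]
      congr 1
      rw [hlam_def]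
      field_simp
      ring
    have hbound : (μ {ω | (m:ℝ)*t ≤ (∑ i, X i) ω}).toReal ≤ Real.exp (-(m:ℝ)*t^2/(2*B^2)) := by
      calc (μ {ω | (m:ℝ)*t ≤ (∑ i, X i) ω}).toReal
          ≤ Real.exp (-lam*((m:ℝ)*t)) * mgf (∑ i, X i) μ lam := hcher
      _ ≤ Real.exp (-lam*((m:ℝ)*t)) * Real.exp ((m:ℝ)*(lam^2*B^2/2)) := by
          exact mul_le_mul_of_nonneg_left hmgf_sum (Real.exp_pos _).le
      _ = Real.exp (-(m:ℝ)*t^2/(2*B^2)) := hexp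
    refine hbound.trans ?_
    rw [← Real.exp_log hδ0, Real.exp_le_exp]
    have hlogd : Real.log (1/δ) = -Real.log δ := by
      rw [one_div, Real.log_inv]
    -- need : -(m)*t²/(2B²) ≤ log δ  i.e.  m*t²/(2B²) ≥ log(1/δ)
    have hee : Real.exp (2*W) * e^2 = 1 := by
      rw [he_def, sq, ← Real.exp_add, ← Real.exp_add,
        show 2*W + (-W + -W) = (0:ℝ) by ring, Real.exp_zero]
    have heq2 : (8 * Real.exp (2*W) * (W+1)^2/ε^2 * Real.log (1/δ)) * t^2
        = 8*(W+1)^2 * Real.log (1/δ) * (Real.exp (2*W) * e^2) := by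
      rw [ht_def, mul_pow]
      field_simp
    rw [hee, mul_one] at heq2
    have h1' : 8*(W+1)^2 * Real.log (1/δ) ≤ (m:ℝ)*t^2 := by
      calc 8*(W+1)^2 * Real.log (1/δ)
          = (8 * Real.exp (2*W) * (W+1)^2/ε^2 * Real.log (1/δ)) * t^2 := heq2.symm
      _ ≤ (m:ℝ)*t^2 := mul_le_mul_of_nonneg_right hm (sq_nonneg t)
    have hkey : Real.log (1/δ) ≤ (m:ℝ)*t^2/(2*B^2) := by
      rw [le_div_iff₀ (by positivity)]
      calc Real.log (1/δ) * (2*B^2) ≤ Real.log (1/δ) * (8*(W+1)^2) := by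
            apply mul_le_mul_of_nonneg_left _ hlog.le
            rw [hB_def]; nlinarith
      _ = 8*(W+1)^2*Real.log (1/δ) := by ring
      _ ≤ (m:ℝ)*t^2 := h1'
    have hrng : -(m:ℝ)*t^2/(2*B^2) = -((m:ℝ)*t^2/(2*B^2)) := by ring
    rw [hrng]
    linarith
  -- the good event
  set Good : Set Ω := {ω | (∑ i, X i) ω ≤ (m:ℝ)*t} ∩ (⋂ i, (Z i) ⁻¹' S) with hGood_def
  have hGoodMeas : MeasurableSet Good := by
    apply MeasurableSet.inter
    · have : Measurable (∑ i, X i) := by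
        have : (∑ i, X i) = fun ω => ∑ i, X i ω := by
          funext ω; rw [Finset.sum_apply]
        rw [this]
        exact Finset.measurable_sum _ (fun i _ => hXmeas i)
      exact measurableSet_le this measurable_const
    · exact MeasurableSet.iInter (fun i => (hZmeas i) hSmeas)
  have hsub : Good ⊆ {ω | err ω w - err ω wstar ≤ ε ∨
      (gradient (err ω) w ≠ 0 ∧
        ∀ v ∈ Metric.closedBall wstar (ε / Real.exp W),
          ⟪gradient (err ω) w, v - w⟫ ≤ 0)} := by
    rintro ω ⟨h1, h2⟩
    simp only [Set.mem_setOf_eq]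
    by_cases hcase : err ω w - err ω wstar ≤ ε
    · exact Or.inl hcase
    · right
      have hxS : ∀ i, ‖(Z i ω).1‖ ≤ 1 := fun i => (Set.mem_iInter.1 h2 i).1
      have hyS : ∀ i, (Z i ω).2 ∈ Set.Icc (0:ℝ) 1 := fun i => (Set.mem_iInter.1 h2 i).2
      have herrw : err ω = fun v => (1/(m:ℝ)) * ∑ i, ((Z i ω).2 - sigmoid10 ⟪v, (Z i ω).1⟫)^2 :=
        funext (herr ω)
      have hgrad := err_hasGradientAt (fun i => (Z i ω).1) (fun i => (Z i ω).2) w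
      have hgradval : gradient (err ω) w
          = (1/(m:ℝ)) • ∑ i, (2 * (sigmoid10 ⟪w, (Z i ω).1⟫ - (Z i ω).2)
              * dsig ⟪w, (Z i ω).1⟫) • (Z i ω).1 := by
        rw [herrw]
        exact hgrad.gradient
      have h1' : ∑ i, 2*((Z i ω).2 - sigmoid10 ⟪wstar, (Z i ω).1⟫) *
          (dsig ⟪w, (Z i ω).1⟫ * (⟪w, (Z i ω).1⟫ - ⟪wstar, (Z i ω).1⟫)
            - 2*Real.exp (-W) * (sigmoid10 ⟪w, (Z i ω).1⟫ - sigmoid10 ⟪wstar, (Z i ω).1⟫))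
          ≤ m * (ε * Real.exp (-W)) := by
        have := h1
        simp only [Set.mem_setOf_eq, Finset.sum_apply, hX_def, hg_def, ht_def, he_def] at this
        exact this
      have hbad : (1/(m:ℝ)) * ∑ i, ((Z i ω).2 - sigmoid10 ⟪w, (Z i ω).1⟫)^2
          - (1/(m:ℝ)) * ∑ i, ((Z i ω).2 - sigmoid10 ⟪wstar, (Z i ω).1⟫)^2 > ε := by
        rw [← herr ω w, ← herr ω wstar]
        exact not_le.1 hcase
      have hdet : ∀ v ∈ Metric.closedBall wstar (ε / Real.exp W),
          ⟪gradient (err ω) w, v - w⟫ < 0 := by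
        intro v hv
        rw [hgradval]
        exact det_core W ε hW hε0 w wstar hwW hwstar (fun i => (Z i ω).1)
          (fun i => (Z i ω).2) hm0 hxS hyS h1' hbad v hv
      constructor
      · intro h0
        have hlt := hdet wstar (Metric.mem_closedBall_self (by positivity))
        rw [h0] at hlt
        simp at hlt
      · intro v hv
        exact (hdet v hv).le
  have hcompl : μ Goodᶜ ≤ ENNReal.ofReal δ := by
    rw [hGood_def, Set.compl_inter]
    refine (measure_union_le _ _).trans ?_
    have hA : μ {ω | (∑ i, X i) ω ≤ (m:ℝ)*t}ᶜ ≤ ENNReal.ofReal δ := by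
      have hsubA : {ω | (∑ i, X i) ω ≤ (m:ℝ)*t}ᶜ ⊆ {ω | (m:ℝ)*t ≤ (∑ i, X i) ω} := by
        intro ω hω
        simp only [Set.mem_compl_iff, Set.mem_setOf_eq, not_le] at hω
        exact hω.le
      refine (measure_mono hsubA).trans ?_
      have hne : μ {ω | (m:ℝ)*t ≤ (∑ i, X i) ω} ≠ ⊤ := measure_ne_top _ _
      rw [← ENNReal.ofReal_toReal hne]
      exact ENNReal.ofReal_le_ofReal hcher2
    have hB0 : μ (⋂ i, (Z i) ⁻¹' S)ᶜ = 0 := by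
      rw [Set.compl_iInter]
      apply measure_iUnion_null
      intro i
      rw [← Set.preimage_compl, ← Measure.map_apply (hZmeas i) hSmeas.compl, hZlaw i]
      exact hScompl
    calc μ ({ω | (∑ i, X i) ω ≤ (m:ℝ)*t}ᶜ) + μ ((⋂ i, (Z i) ⁻¹' S)ᶜ)
        ≤ ENNReal.ofReal δ + 0 := add_le_add hA (le_of_eq hB0)
    _ = ENNReal.ofReal δ := add_zero _
  have hGoodProb : ENNReal.ofReal (1 - δ) ≤ μ Good := by
    have htot : μ Good + μ Goodᶜ = 1 := by
      rw [measure_add_measure_compl hGoodMeas, measure_univ]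
    have h1le : (1:ℝ≥0∞) - ENNReal.ofReal δ ≤ μ Good := by
      rw [tsub_le_iff_right]
      calc (1:ℝ≥0∞) = μ Good + μ Goodᶜ := htot.symm
      _ ≤ μ Good + ENNReal.ofReal δ := add_le_add le_rfl hcompl
    calc ENNReal.ofReal (1 - δ) = ENNReal.ofReal 1 - ENNReal.ofReal δ :=
        ENNReal.ofReal_sub 1 hδ0.le
    _ = 1 - ENNReal.ofReal δ := by rw [ENNReal.ofReal_one]
    _ ≤ μ Good := h1le
  exact le_trans hGoodProb (measure_mono hsub)
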